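/- For every real ε > 0, there exist positive integers m, n and an m×n binary uniquely identifying (UI) matrix Q whose query ratio satisfies m/n ≤ ε. In other words, query ratios arbitrarily close to zero are achievable. -/

import Mathlib

namespace Stmt11Aux

def Rt : ℕ → Type
  | 0 => Fin 1
  | k+1 => Rt k ⊕ Rt k

def Ct : ℕ → Type
  | 0 => Fin 1
  | k+1 => Ct k ⊕ (Ct k ⊕ Rt k)

instance instFR : ∀ k, Fintype (Rt k)
  | 0 => inferInstanceAs (Fintype (Fin 1))
  | k+1 => letI := instFR k; inferInstanceAs (Fintype (Rt k ⊕ Rt k))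

instance instDR : ∀ k, DecidableEq (Rt k)
  | 0 => inferInstanceAs (DecidableEq (Fin 1))
  | k+1 => letI := instDR k; inferInstanceAs (DecidableEq (Rt k ⊕ Rt k))

instance instFC : ∀ k, Fintype (Ct k)
  | 0 => inferInstanceAs (Fintype (Fin 1))
  | k+1 => letI := instFC k; inferInstanceAs (Fintype (Ct k ⊕ (Ct k ⊕ Rt k)))

instance : Unique (Rt 0) := inferInstanceAs (Unique (Fin 1))
instance : Unique (Ct 0) := inferInstanceAs (Unique (Fin 1))

open Matrix

def A : ∀ k, Matrix (Rt k) (Ct k) ℤ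
  | 0 => fun _ _ => 1
  | k+1 => fromBlocks (A k) (fromCols (A k) 1) (A k) (fromCols (-(A k)) 0)

lemma card_R (k : ℕ) : Fintype.card (Rt k) = 2 ^ k := by
  induction k with
  | zero => simp [Rt]; rfl
  | succ k ih => rw [show Fintype.card (Rt (k+1)) = Fintype.card (Rt k) + Fintype.card (Rt k) from Fintype.card_sum, ih]; ring

lemma card_C (k : ℕ) : 2 * Fintype.card (Ct k) = (k + 2) * 2 ^ k := by
  induction k with
  | zero => simp [Ct]; rfl
  | succ k ih =>
    have h : Fintype.card (Ct (k+1))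
        = Fintype.card (Ct k) + (Fintype.card (Ct k) + Fintype.card (Rt k)) := by
      exact Fintype.card_sum.trans (congrArg (Fintype.card (Ct k) + ·) Fintype.card_sum)
    rw [h, card_R]
    calc 2 * (Fintype.card (Ct k) + (Fintype.card (Ct k) + 2 ^ k))
        = 2 * (2 * Fintype.card (Ct k)) + 2 * 2 ^ k := by ring
      _ = 2 * ((k + 2) * 2 ^ k) + 2 * 2 ^ k := by rw [ih]
      _ = (k + 1 + 2) * 2 ^ (k + 1) := by ring

lemma entries (k : ℕ) : ∀ i j, A k i j = -1 ∨ A k i j = 0 ∨ A k i j = 1 := by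
  induction k with
  | zero => intro i j; right; right; rfl
  | succ k ih =>
    intro i j
    rcases i with i | i <;> rcases j with j | j
    · exact ih i j
    · rcases j with j | j
      · exact ih i j
      · simp only [A, fromBlocks_apply₁₂, fromCols_apply_inr, one_apply]
        split <;> simp
    · exact ih i j
    · rcases j with j | j
      · have := ih i j
        simp only [A, fromBlocks_apply₂₂, fromCols_apply_inl, Matrix.neg_apply]
        omega
      · simp [A]

lemma UI (k : ℕ) : ∀ z : Ct k → ℤ, (∀ j, z j = -1 ∨ z j = 0 ∨ z j = 1) →
    A k *ᵥ z = 0 → z = 0 := by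
  induction k with
  | zero =>
    intro z _ h
    funext j
    have h0 := congrFun h default
    rw [Subsingleton.elim j default]
    simpa [A, mulVec, dotProduct, Fintype.sum_unique] using h0
  | succ k ih =>
    intro z hz h
    set x : Ct k → ℤ := fun j => z (Sum.inl j) with hx
    set y : Ct k → ℤ := fun j => z (Sum.inr (Sum.inl j)) with hy
    set u : Rt k → ℤ := fun j => z (Sum.inr (Sum.inr j)) with hu
    have hzeq : z = Sum.elim x (Sum.elim y u) := by
      funext j; rcases j with j | j; · rfl
      rcases j with j | j <;> rfl
    rw [hzeq] at h
    replace h : fromBlocks (A k) (fromCols (A k) 1) (A k) (fromCols (-(A k)) 0)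
        *ᵥ Sum.elim x (Sum.elim y u) = 0 := h
    rw [fromBlocks_mulVec] at h
    have htop : ∀ i, (A k *ᵥ x) i + ((A k *ᵥ y) i + u i) = 0 := by
      intro i
      have h1 := congrFun h (Sum.inl i)
      simpa [fromCols_mulVec_sumElim, Matrix.one_mulVec] using h1
    have hbot : ∀ i, (A k *ᵥ x) i + (-(A k *ᵥ y) i) = 0 := by
      intro i
      have h1 := congrFun h (Sum.inr i)
      simpa [fromCols_mulVec_sumElim, Matrix.zero_mulVec, Matrix.neg_mulVec] using h1
    have hAx : ∀ i, (A k *ᵥ x) i = 0 := by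
      intro i
      have h1 := htop i
      have h2 := hbot i
      have h3 : u i = -1 ∨ u i = 0 ∨ u i = 1 := hz (Sum.inr (Sum.inr i))
      omega
    have hAy : ∀ i, (A k *ᵥ y) i = 0 := by
      intro i; have h1 := hbot i; have := hAx i; omega
    have hu0 : ∀ i, u i = 0 := by
      intro i; have h1 := htop i; have := hAx i; have := hAy i; omega
    have hx0 : x = 0 := ih x (fun j => hz (Sum.inl j)) (funext hAx)
    have hy0 : y = 0 := ih y (fun j => hz (Sum.inr (Sum.inl j))) (funext hAy)
    funext j
    rcases j with j | j
    · exact congrFun hx0 j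
    rcases j with j | j
    · exact congrFun hy0 j
    · exact hu0 j

end Stmt11Aux

theorem stmt11 (ε : ℝ) (hε : 0 < ε) :
    ∃ (m n : ℕ) (Q : Matrix (Fin m) (Fin n) ℤ), 0 < m ∧ 0 < n ∧
      (∀ i j, Q i j = 0 ∨ Q i j = 1) ∧
      (∀ z : Fin n → ℤ, (∀ j, z j = -1 ∨ z j = 0 ∨ z j = 1) → Q.mulVec z = 0 → z = 0) ∧
      (m : ℝ) / (n : ℝ) ≤ ε := by
  classical
  open Stmt11Aux Matrix in
  obtain ⟨k, hk⟩ := exists_nat_ge (4 / ε)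
  set P : Matrix (Rt k) (Ct k) ℤ := fun i j => if A k i j = 1 then 1 else 0 with hP
  set N : Matrix (Rt k) (Ct k) ℤ := fun i j => if A k i j = -1 then 1 else 0 with hN
  set Q0 : Matrix (Rt k ⊕ Rt k) (Ct k) ℤ := fromRows P N with hQ0
  have hPN : ∀ i j, A k i j = P i j - N i j := by
    intro i j
    rcases entries k i j with h | h | h <;> simp [hP, hN, h]
  have hQ01 : ∀ a b, Q0 a b = 0 ∨ Q0 a b = 1 := by
    intro a b
    rcases a with a | a
    · rw [hQ0, fromRows_apply_inl, hP]; dsimp only; split <;> simp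
    · rw [hQ0, fromRows_apply_inr, hN]; dsimp only; split <;> simp
  set eR := (Fintype.equivFin (Rt k ⊕ Rt k))
  set eC := (Fintype.equivFin (Ct k))
  refine ⟨Fintype.card (Rt k ⊕ Rt k), Fintype.card (Ct k),
    Matrix.reindex eR eC Q0, ?_, ?_, ?_, ?_, ?_⟩
  · rw [Fintype.card_sum, card_R]; positivity
  · have h1 := card_C k
    have h2 : 0 < (k + 2) * 2 ^ k := by positivity
    omega
  · intro i j
    rcases hQ01 (eR.symm i) (eC.symm j) with h | h
    · left; simpa [Matrix.reindex_apply, Matrix.submatrix_apply] using h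
    · right; simpa [Matrix.reindex_apply, Matrix.submatrix_apply] using h
  · intro z hz hQz
    rw [Matrix.reindex_apply, Matrix.submatrix_mulVec_equiv] at hQz
    have key : Q0 *ᵥ (z ∘ eC) = 0 := by
      funext r
      have h1 := congrFun hQz (eR r)
      simpa using h1
    have hPz : ∀ i, (P *ᵥ (z ∘ eC)) i = 0 := by
      intro i
      have h1 := congrFun key (Sum.inl i)
      simpa [hQ0, fromRows_mulVec] using h1
    have hNz : ∀ i, (N *ᵥ (z ∘ eC)) i = 0 := by
      intro i
      have h1 := congrFun key (Sum.inr i)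
      simpa [hQ0, fromRows_mulVec] using h1
    have hAz : A k *ᵥ (z ∘ eC) = 0 := by
      funext i
      have h1 := hPz i
      have h2 := hNz i
      simp only [mulVec, dotProduct] at h1 h2 ⊢
      have hsum : ∑ j, A k i j * (z ∘ eC) j
          = ∑ j, (P i j * (z ∘ eC) j - N i j * (z ∘ eC) j) := by
        refine Finset.sum_congr rfl fun j _ => ?_
        rw [hPN i j]; ring
      rw [hsum, Finset.sum_sub_distrib, h1, h2]
      simp
    have hz0 := UI k (z ∘ eC) (fun j => hz (eC j)) hAz
    funext j
    have h1 := congrFun hz0 (eC.symm j)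
    simpa using h1
  · have hcardR : (Fintype.card (Rt k ⊕ Rt k) : ℝ) = 2 * 2 ^ k := by
      rw [Fintype.card_sum, card_R]; push_cast; ring
    have hcardC : 2 * (Fintype.card (Ct k) : ℝ) = (k + 2) * 2 ^ k := by
      have h1 := card_C k
      have h2 : ((2 * Fintype.card (Ct k) : ℕ) : ℝ) = (((k + 2) * 2 ^ k : ℕ) : ℝ) :=
        congrArg _ h1
      push_cast at h2
      linarith
    have hnpos : (0:ℝ) < Fintype.card (Ct k) := by
      have h1 := card_C k
      have h2 : 0 < (k + 2) * 2 ^ k := by positivity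
      have h3 : 0 < Fintype.card (Ct k) := by omega
      exact_mod_cast h3
    rw [div_le_iff₀ hnpos, hcardR]
    have hk4 : 4 ≤ ε * ((k : ℝ) + 2) := by
      have h1 : 4 / ε ≤ (k : ℝ) := hk
      have h2 : 4 ≤ ε * k := by
        rw [div_le_iff₀ hε] at h1; linarith
      nlinarith
    have h2pos : (0:ℝ) < 2 ^ k := by positivity
    nlinarith [hcardC]
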